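/- Let J be an invertible antisymmetric 2k×2k matrix. On the open set of pairs (K,M) ∈ M_{d×2k} × Sym(R^d) with M invertible, the map J_h(K,M) := -½ J^{-1} K^T M^{-1} K is a momentum map for the right action (K,M) ↦ (Kg^{-1}, M) of Sp(R^{2k},J) with respect to the Poisson bracket {f,g}(K,M) = -Tr(M (∂f/∂K)^T J (∂g/∂K)); moreover it is equivariant: J_h(Kg^{-1},M) = g J_h(K,M) g^{-1} for all g ∈ Sp(R^{2k},J). -/

import Mathlib

open Matrix

attribute [local instance] Matrix.normedAddCommGroup Matrix.normedSpace

namespace UntanglingAux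

variable {m n : Type*} [Fintype m] [Fintype n] [DecidableEq m] [DecidableEq n]

lemma trace_mul_stdBasisMatrix (P : Matrix n m ℝ) (i : m) (a : n) :
    (P * Matrix.single i a (1:ℝ)).trace = P a i := by
  simp [Matrix.trace, Matrix.diag, Matrix.mul_apply, Matrix.single, ite_and, mul_ite, mul_one, mul_zero, Finset.sum_ite_eq, Finset.sum_ite_eq']

lemma transpose_stdBasisMatrix (i : m) (a : n) :
    (Matrix.single i a (1:ℝ))ᵀ = Matrix.single a i 1 := by
  ext x y
  simp [Matrix.single, and_comm]

lemma clm_apply_eq_trace (L : Matrix m n ℝ →L[ℝ] ℝ) (δ : Matrix m n ℝ) :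
    L δ = ((Matrix.of fun a i => L (Matrix.single i a 1)) * δ).trace := by
  conv_lhs => rw [matrix_eq_sum_single δ]
  have h : ∀ (i : m) (j : n), Matrix.single i j (δ i j) = δ i j • Matrix.single i j (1:ℝ) := by
    intro i j; rw [smul_single]; simp
  simp only [h, map_sum, _root_.map_smul, smul_eq_mul, Matrix.trace, Matrix.diag, Matrix.mul_apply,
    Matrix.of_apply]
  rw [Finset.sum_comm]
  exact Finset.sum_congr rfl fun i _ => Finset.sum_congr rfl fun a _ => mul_comm _ _

/-- The bilinear form `(X, Y) ↦ Tr(A Xᵀ B Y C)`. -/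
noncomputable def bilL (A : Matrix n n ℝ) (B : Matrix m m ℝ) (C : Matrix n n ℝ) :
    Matrix m n ℝ →ₗ[ℝ] Matrix m n ℝ →ₗ[ℝ] ℝ :=
  LinearMap.mk₂ ℝ (fun X Y => (A * Xᵀ * B * Y * C).trace)
    (by intros; simp [Matrix.transpose_add, Matrix.add_mul, Matrix.mul_add])
    (by intros; simp [Matrix.transpose_smul, Matrix.smul_mul, Matrix.mul_smul])
    (by intros; simp [Matrix.mul_add, Matrix.add_mul])
    (by intros; simp [Matrix.mul_smul, Matrix.smul_mul])

noncomputable def bilC (A : Matrix n n ℝ) (B : Matrix m m ℝ) (C : Matrix n n ℝ) :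
    Matrix m n ℝ →L[ℝ] Matrix m n ℝ →L[ℝ] ℝ :=
  LinearMap.toContinuousLinearMap
    { toFun := fun X => LinearMap.toContinuousLinearMap (bilL A B C X)
      map_add' := fun X Y => by ext Z; simp
      map_smul' := fun c X => by ext Z; simp }

@[simp] lemma bilC_apply (A : Matrix n n ℝ) (B : Matrix m m ℝ) (C : Matrix n n ℝ)
    (X Y : Matrix m n ℝ) : bilC A B C X Y = (A * Xᵀ * B * Y * C).trace := by
  simp [bilC, bilL]

lemma hasFDerivAt_quad (A : Matrix n n ℝ) (B : Matrix m m ℝ) (C : Matrix n n ℝ)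
    (K : Matrix m n ℝ) :
    HasFDerivAt (fun X : Matrix m n ℝ => (A * Xᵀ * B * X * C).trace)
      (@HAdd.hAdd _ _ _ instHAdd (bilC A B C K) ((bilC A B C).flip K)) K := by
  have hb := (bilC A B C).isBoundedBilinearMap
  have h1 : HasFDerivAt (fun X : Matrix m n ℝ => (X, X))
      ((ContinuousLinearMap.id ℝ (Matrix m n ℝ)).prod (ContinuousLinearMap.id ℝ _)) K :=
    ((ContinuousLinearMap.id ℝ (Matrix m n ℝ)).prod (ContinuousLinearMap.id ℝ _)).hasFDerivAt
  have h2 : HasFDerivAt (fun X : Matrix m n ℝ => bilC A B C X X)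
      ((hb.deriv (K, K)).comp
        (((ContinuousLinearMap.id ℝ (Matrix m n ℝ)).prod (ContinuousLinearMap.id ℝ _)))) K :=
    HasFDerivAt.comp (f := fun X : Matrix m n ℝ => (X, X)) K (hb.hasFDerivAt (K, K)) h1
  have h3 : (fun X : Matrix m n ℝ => bilC A B C X X)
      = fun X : Matrix m n ℝ => (A * Xᵀ * B * X * C).trace := by
    ext X; simp
  rw [h3] at h2
  convert h2 using 1
  · rfl
  · ext X; rfl


end UntanglingAux

open UntanglingAux

/-- The gradient `∂f/∂K ∈ M_{2k×d}` of a function of `K ∈ M_{d×2k}`, relative to the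
trace pairing `⟨∂f/∂K, δK⟩ = Tr((∂f/∂K) δK)`. -/
noncomputable def gradK {k d : ℕ} (f : Matrix (Fin d) (Fin (2 * k)) ℝ → ℝ)
    (K : Matrix (Fin d) (Fin (2 * k)) ℝ) : Matrix (Fin (2 * k)) (Fin d) ℝ :=
  Matrix.of fun a i => fderiv ℝ f K (Matrix.single i a 1)

/-- The (minus) Lie-Poisson bracket
`{f,g}(K,M) = -Tr(M (∂f/∂K)ᵀ J (∂g/∂K))` on the dual of the generalized Heisenberg
algebra. -/
noncomputable def heisPB {k d : ℕ} (J : Matrix (Fin (2 * k)) (Fin (2 * k)) ℝ)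
    (f g : Matrix (Fin d) (Fin (2 * k)) ℝ × Matrix (Fin d) (Fin d) ℝ → ℝ)
    (K : Matrix (Fin d) (Fin (2 * k)) ℝ) (M : Matrix (Fin d) (Fin d) ℝ) : ℝ :=
  -(M * (gradK (fun K' => f (K', M)) K)ᵀ * J * gradK (fun K' => g (K', M)) K).trace

/-- The untangling momentum map `J_h(K,M) = -½ J⁻¹ Kᵀ M⁻¹ K`. -/
noncomputable def JHmap {k d : ℕ} (J : Matrix (Fin (2 * k)) (Fin (2 * k)) ℝ)
    (p : Matrix (Fin d) (Fin (2 * k)) ℝ × Matrix (Fin d) (Fin d) ℝ) :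
    Matrix (Fin (2 * k)) (Fin (2 * k)) ℝ :=
  -((1 / 2 : ℝ) • (J⁻¹ * p.1ᵀ * p.2⁻¹ * p.1))

/-- On the open set where `M` is invertible, `J_h(K,M) = -½ J⁻¹ Kᵀ M⁻¹ K` is a momentum
map for the action `(K,M) ↦ (Kg⁻¹, M)` of `Sp(ℝ^{2k},J)` with respect to the Poisson
bracket `{f,g}(K,M) = -Tr(M (∂f/∂K)ᵀ J (∂g/∂K))`: for every differentiable `f`, every
`S ∈ sp(ℝ^{2k},J)` with infinitesimal generator `(K,M) ↦ (-KS,0)`, one has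
`{f, ⟨J_h,S⟩} = df·(-KS)`; moreover `J_h` is equivariant:
`J_h(Kg⁻¹,M) = g J_h(K,M) g⁻¹`. -/
theorem untangling_momentum_map (k d : ℕ)
    (J : Matrix (Fin (2 * k)) (Fin (2 * k)) ℝ) (hanti : Jᵀ = -J)
    (hJ : IsUnit J.det) :
    (∀ f : Matrix (Fin d) (Fin (2 * k)) ℝ × Matrix (Fin d) (Fin d) ℝ → ℝ,
      (∀ M, Differentiable ℝ (fun K => f (K, M))) →
      ∀ S : Matrix (Fin (2 * k)) (Fin (2 * k)) ℝ, J * S + Sᵀ * J = 0 →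
      ∀ (K : Matrix (Fin d) (Fin (2 * k)) ℝ) (M : Matrix (Fin d) (Fin d) ℝ),
        Mᵀ = M → IsUnit M.det →
        heisPB J f (fun p => (JHmap J p * S).trace) K M =
          fderiv ℝ (fun K' => f (K', M)) K (-(K * S))) ∧
    (∀ g : Matrix (Fin (2 * k)) (Fin (2 * k)) ℝ, gᵀ * J * g = J → IsUnit g.det →
      ∀ (K : Matrix (Fin d) (Fin (2 * k)) ℝ) (M : Matrix (Fin d) (Fin d) ℝ),
        Mᵀ = M → IsUnit M.det →
        JHmap J (K * g⁻¹, M) = g * JHmap J (K, M) * g⁻¹) := by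
  have hJJ : J * J⁻¹ = 1 := Matrix.mul_nonsing_inv J hJ
  have hJJ' : J⁻¹ * J = 1 := Matrix.nonsing_inv_mul J hJ
  have hJinvT : J⁻¹ᵀ = -J⁻¹ := by
    rw [Matrix.transpose_nonsing_inv, hanti]
    refine Matrix.inv_eq_left_inv ?_
    rw [Matrix.neg_mul, Matrix.mul_neg, neg_neg, hJJ']
  constructor
  · intro f hf S hS K M hM hMu
    have hMM' : M⁻¹ * M = 1 := Matrix.nonsing_inv_mul M hMu
    have hMt : M⁻¹ᵀ = M⁻¹ := by rw [Matrix.transpose_nonsing_inv, hM]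
    have h0 : J * S = -(Sᵀ * J) := eq_neg_of_add_eq_zero_left hS
    have h1 : Sᵀ * J = -(J * S) := eq_neg_of_add_eq_zero_right hS
    have hJSJ : J * S * J⁻¹ = -Sᵀ := by
      rw [h0, Matrix.neg_mul, Matrix.mul_assoc, hJJ, Matrix.mul_one]
    have hJS' : J⁻¹ * Sᵀ = -(S * J⁻¹) := by
      calc J⁻¹ * Sᵀ = J⁻¹ * Sᵀ * (J * J⁻¹) := by rw [hJJ, Matrix.mul_one]
        _ = J⁻¹ * (Sᵀ * J) * J⁻¹ := by simp only [Matrix.mul_assoc]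
        _ = J⁻¹ * (-(J * S)) * J⁻¹ := by rw [h1]
        _ = -(J⁻¹ * J * (S * J⁻¹)) := by
            simp only [Matrix.mul_neg, Matrix.neg_mul, Matrix.mul_assoc]
        _ = -(S * J⁻¹) := by rw [hJJ', Matrix.one_mul]
    -- the hamiltonian of S
    have hh : (fun K' => ((JHmap J (K', M)) * S).trace)
        = fun K' : Matrix (Fin d) (Fin (2 * k)) ℝ =>
            (-(1 / 2 : ℝ)) * (J⁻¹ * K'ᵀ * M⁻¹ * K' * S).trace := by
      funext K'
      simp [JHmap, Matrix.neg_mul, Matrix.smul_mul, Matrix.trace_smul]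
    have hD : HasFDerivAt (fun K' => ((JHmap J (K', M)) * S).trace)
        ((-(1 / 2 : ℝ)) • (@HAdd.hAdd _ _ _ instHAdd (bilC J⁻¹ M⁻¹ S K) ((bilC J⁻¹ M⁻¹ S).flip K))) K := by
      rw [hh]
      exact (hasFDerivAt_quad J⁻¹ M⁻¹ S K).const_mul _
    have hfd := hD.fderiv
    -- the transpose identity
    have HT : M⁻¹ * K * S * J⁻¹ = (S * J⁻¹ * Kᵀ * M⁻¹)ᵀ := by
      refine Eq.symm ?_
      calc (S * J⁻¹ * Kᵀ * M⁻¹)ᵀ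
          = M⁻¹ᵀ * (Kᵀᵀ * (J⁻¹ᵀ * Sᵀ)) := by
            simp only [Matrix.transpose_mul, Matrix.mul_assoc]
        _ = M⁻¹ * (K * ((-J⁻¹) * Sᵀ)) := by rw [hMt, Matrix.transpose_transpose, hJinvT]
        _ = M⁻¹ * (K * (S * J⁻¹)) := by rw [Matrix.neg_mul, hJS', neg_neg]
        _ = M⁻¹ * K * S * J⁻¹ := by simp only [Matrix.mul_assoc]
    have hgrad : gradK (fun K' => ((JHmap J (K', M)) * S).trace) K
        = -(S * J⁻¹ * Kᵀ * M⁻¹) := by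
      apply Matrix.ext; intro a i
      show fderiv ℝ (fun K' => ((JHmap J (K', M)) * S).trace) K (Matrix.single i a 1) = _
      rw [hfd]
      simp only [ContinuousLinearMap.smul_apply, ContinuousLinearMap.add_apply,
        ContinuousLinearMap.flip_apply, bilC_apply, smul_eq_mul]
      have t2 : (J⁻¹ * Kᵀ * M⁻¹ * Matrix.single i a (1:ℝ) * S).trace
          = (S * J⁻¹ * Kᵀ * M⁻¹) a i := by
        rw [Matrix.trace_mul_comm]
        have e : S * (J⁻¹ * Kᵀ * M⁻¹ * Matrix.single i a (1:ℝ))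
            = (S * J⁻¹ * Kᵀ * M⁻¹) * Matrix.single i a (1:ℝ) := by
          simp only [Matrix.mul_assoc]
        rw [e, trace_mul_stdBasisMatrix]
      have t1 : (J⁻¹ * (Matrix.single i a (1:ℝ))ᵀ * M⁻¹ * K * S).trace
          = (S * J⁻¹ * Kᵀ * M⁻¹) a i := by
        have e1 : J⁻¹ * (Matrix.single i a (1:ℝ))ᵀ * M⁻¹ * K * S
            = (J⁻¹ * Matrix.single a i (1:ℝ)) * (M⁻¹ * K * S) := by
          rw [transpose_stdBasisMatrix]; simp only [Matrix.mul_assoc]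
        rw [e1, Matrix.trace_mul_comm]
        have e2 : (M⁻¹ * K * S) * (J⁻¹ * Matrix.single a i (1:ℝ))
            = (M⁻¹ * K * S * J⁻¹) * Matrix.single a i (1:ℝ) := by
          simp only [Matrix.mul_assoc]
        rw [e2, trace_mul_stdBasisMatrix, HT, Matrix.transpose_apply]
      show -(1 / 2 : ℝ) * (bilC J⁻¹ M⁻¹ S K (Matrix.single i a 1)
        + bilC J⁻¹ M⁻¹ S (Matrix.single i a 1) K) = _
      rw [bilC_apply, bilC_apply]
      rw [t2, t1, Matrix.neg_apply]
      ring
    simp only [heisPB]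
    rw [hgrad]
    rw [clm_apply_eq_trace (fderiv ℝ (fun K' => f (K', M)) K) (-(K * S))]
    have hG : (Matrix.of fun a i =>
        (fderiv ℝ (fun K' => f (K', M)) K) (Matrix.single i a 1))
        = gradK (fun K' => f (K', M)) K := rfl
    rw [hG]
    set G := gradK (fun K' => f (K', M)) K with hGdef
    simp only [Matrix.mul_neg, Matrix.trace_neg, neg_neg]
    have e1 : M * Gᵀ * J * (S * J⁻¹ * Kᵀ * M⁻¹)
        = M * Gᵀ * (J * S * J⁻¹) * (Kᵀ * M⁻¹) := by simp only [Matrix.mul_assoc]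
    rw [e1, hJSJ, Matrix.mul_neg, Matrix.neg_mul, Matrix.trace_neg, neg_inj]
    have e2 : M * Gᵀ * Sᵀ * (Kᵀ * M⁻¹) = (M * (K * S * G)ᵀ) * M⁻¹ := by
      simp only [Matrix.transpose_mul, Matrix.mul_assoc]
    rw [e2, Matrix.trace_mul_comm, ← Matrix.mul_assoc, hMM', Matrix.one_mul,
      Matrix.trace_transpose, Matrix.trace_mul_comm]
  · intro g hg hgu K M hM hMu
    have hgg : g * g⁻¹ = 1 := Matrix.mul_nonsing_inv g hgu
    have h1 : gᵀ * J = J * g⁻¹ := by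
      calc gᵀ * J = gᵀ * J * (g * g⁻¹) := by rw [hgg, Matrix.mul_one]
        _ = gᵀ * J * g * g⁻¹ := by simp only [Matrix.mul_assoc]
        _ = J * g⁻¹ := by rw [hg]
    have h2 : J * g = (g⁻¹)ᵀ * J := by
      have h3 := congrArg Matrix.transpose h1
      simp only [Matrix.transpose_mul, Matrix.transpose_transpose, hanti,
        Matrix.neg_mul, Matrix.mul_neg] at h3
      exact neg_inj.mp h3
    have hginv : J⁻¹ * (g⁻¹)ᵀ = g * J⁻¹ := by
      calc J⁻¹ * (g⁻¹)ᵀ = J⁻¹ * (g⁻¹)ᵀ * (J * J⁻¹) := by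
            rw [Matrix.mul_nonsing_inv J hJ, Matrix.mul_one]
        _ = J⁻¹ * ((g⁻¹)ᵀ * J) * J⁻¹ := by simp only [Matrix.mul_assoc]
        _ = J⁻¹ * (J * g) * J⁻¹ := by rw [← h2]
        _ = (J⁻¹ * J) * (g * J⁻¹) := by simp only [Matrix.mul_assoc]
        _ = g * J⁻¹ := by rw [Matrix.nonsing_inv_mul J hJ, Matrix.one_mul]
    show -((1 / 2 : ℝ) • (J⁻¹ * (K * g⁻¹)ᵀ * M⁻¹ * (K * g⁻¹)))
        = g * -((1 / 2 : ℝ) • (J⁻¹ * Kᵀ * M⁻¹ * K)) * g⁻¹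
    have e : J⁻¹ * (K * g⁻¹)ᵀ * M⁻¹ * (K * g⁻¹)
        = g * (J⁻¹ * Kᵀ * M⁻¹ * K) * g⁻¹ := by
      calc J⁻¹ * (K * g⁻¹)ᵀ * M⁻¹ * (K * g⁻¹)
          = (J⁻¹ * (g⁻¹)ᵀ) * (Kᵀ * (M⁻¹ * (K * g⁻¹))) := by
            simp only [Matrix.transpose_mul, Matrix.mul_assoc]
        _ = (g * J⁻¹) * (Kᵀ * (M⁻¹ * (K * g⁻¹))) := by rw [hginv]
        _ = g * (J⁻¹ * Kᵀ * M⁻¹ * K) * g⁻¹ := by simp only [Matrix.mul_assoc]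
    rw [e, Matrix.mul_neg, Matrix.neg_mul, Matrix.mul_smul, Matrix.smul_mul]
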